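/- Let S be a countable polymer set with symmetric reflexive incompatibility relation, ẑ : S → [0,∞) and a : S → (0,∞), and suppose Σ_{Y ≁ X} ẑ(Y) e^{a(Y)} ≤ a(X) for every X ∈ S. Then 𝔛_X(A) ≤ ẑ(X) e^{a(X)} for every finite A ⊆ S and every X ∈ A, and consequently Σ_{Y ≁ X} 𝔛_Y(S) ≤ a(X) for every X ∈ S, where 𝔛_Y(S) denotes the sum of Π_{W ∈ Δ} ẑ(W) over all finite clusters Δ ⊆ S containing Y. -/

import Mathlib

open scoped Classical

/-- A nonempty finite set of polymers is a cluster if it admits no decomposition into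
two nonempty disjoint elementwise compatible parts. -/
def IsCluster {S : Type*} (incomp : S → S → Prop) (Δ : Finset S) : Prop :=
  Δ.Nonempty ∧
    ¬ ∃ Δ₁ Δ₂ : Finset S, Δ₁.Nonempty ∧ Δ₂.Nonempty ∧ Disjoint Δ₁ Δ₂ ∧
      (∀ X, X ∈ Δ ↔ (X ∈ Δ₁ ∨ X ∈ Δ₂)) ∧
      ∀ X ∈ Δ₁, ∀ Y ∈ Δ₂, ¬ incomp X Y

/-- `𝔛_X(A)`: the sum over clusters `Δ ⊆ A` containing `X` of `Π_{Y ∈ Δ} ẑ(Y)`. -/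
noncomputable def clusterSum {S : Type*} (incomp : S → S → Prop) (zhat : S → ℝ)
    (A : Finset S) (X : S) : ℝ :=
  ∑ Δ ∈ A.powerset.filter (fun Δ => IsCluster incomp Δ ∧ X ∈ Δ), ∏ Y ∈ Δ, zhat Y

/-- `𝔛_Y(S)`: the sum over all finite clusters `Δ ⊆ S` containing `Y` of
`Π_{W ∈ Δ} ẑ(W)` (as an extended nonnegative real). -/
noncomputable def clusterSumTop {S : Type*} (incomp : S → S → Prop) (zhat : S → ℝ)
    (Y : S) : ENNReal :=
  ∑' Δ : {Δ : Finset S // IsCluster incomp Δ ∧ Y ∈ Δ},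
    ENNReal.ofReal (∏ W ∈ Δ.1, zhat W)


section auxKP
variable {S : Type*} (incomp : S → S → Prop)

/-- A single compatibility-graph step inside a finite set `Γ`. -/
def pstep (Γ : Finset S) (u v : S) : Prop := u ∈ Γ ∧ v ∈ Γ ∧ incomp u v

/-- Reachability inside `Γ`. -/
def preach (Γ : Finset S) : S → S → Prop := Relation.ReflTransGen (pstep incomp Γ)

/-- The connected component of `Y` inside `Γ`. -/
noncomputable def pcomp (Γ : Finset S) (Y : S) : Finset S := Γ.filter (preach incomp Γ Y)

variable {incomp}

lemma preach_mem {Γ : Finset S} {y z : S} (h : preach incomp Γ y z) (hy : y ∈ Γ) : z ∈ Γ := by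
  induction h with
  | refl => exact hy
  | tail _ st _ => exact st.2.1

lemma preach_symm (hsym : ∀ X Y, incomp X Y → incomp Y X) {Γ : Finset S} {y z : S}
    (h : preach incomp Γ y z) : preach incomp Γ z y := by
  induction h with
  | refl => exact .refl
  | tail _ st ih => exact .head ⟨st.2.1, st.1, hsym _ _ st.2.2⟩ ih

lemma mem_pcomp {Γ : Finset S} {Y z : S} :
    z ∈ pcomp incomp Γ Y ↔ z ∈ Γ ∧ preach incomp Γ Y z := Finset.mem_filter

lemma pcomp_subset {Γ : Finset S} {Y : S} : pcomp incomp Γ Y ⊆ Γ := Finset.filter_subset _ _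

lemma self_mem_pcomp {Γ : Finset S} {Y : S} (hY : Y ∈ Γ) : Y ∈ pcomp incomp Γ Y :=
  mem_pcomp.2 ⟨hY, .refl⟩

lemma isCluster_iff (hsym : ∀ X Y, incomp X Y → incomp Y X) {Δ : Finset S} :
    IsCluster incomp Δ ↔ Δ.Nonempty ∧ ∀ y ∈ Δ, ∀ z ∈ Δ, preach incomp Δ y z := by
  constructor
  · rintro ⟨hne, hdec⟩
    refine ⟨hne, fun y hy z hz => ?_⟩
    by_contra hr
    refine hdec ⟨pcomp incomp Δ y, Δ \ pcomp incomp Δ y, ⟨y, self_mem_pcomp hy⟩,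
      ⟨z, Finset.mem_sdiff.2 ⟨hz, fun hzc => hr (mem_pcomp.1 hzc).2⟩⟩,
      Finset.disjoint_sdiff, fun W => ?_, fun u hu v hv huv => ?_⟩
    · constructor
      · intro hW
        by_cases h : W ∈ pcomp incomp Δ y
        · exact Or.inl h
        · exact Or.inr (Finset.mem_sdiff.2 ⟨hW, h⟩)
      · rintro (h | h)
        · exact pcomp_subset h
        · exact (Finset.mem_sdiff.1 h).1
    · have hu' := mem_pcomp.1 hu
      have hv' := Finset.mem_sdiff.1 hv
      exact hv'.2 (mem_pcomp.2 ⟨hv'.1, hu'.2.tail ⟨hu'.1, hv'.1, huv⟩⟩)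
  · rintro ⟨hne, hconn⟩
    refine ⟨hne, ?_⟩
    rintro ⟨Δ₁, Δ₂, ⟨y, hy⟩, ⟨z, hz⟩, hdisj, hcover, hsep⟩
    have hyΔ : y ∈ Δ := (hcover y).2 (Or.inl hy)
    have hzΔ : z ∈ Δ := (hcover z).2 (Or.inr hz)
    have key : ∀ w, preach incomp Δ y w → w ∈ Δ₁ := by
      intro w hw
      induction hw with
      | refl => exact hy
      | tail _ st ih =>
        rcases (hcover _).1 st.2.1 with h | h
        · exact h
        · exact absurd st.2.2 (hsep _ ih _ h)
    exact Finset.disjoint_left.1 hdisj (key z (hconn y hyΔ z hzΔ)) hz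

lemma pcomp_eq_of_mem (hsym : ∀ X Y, incomp X Y → incomp Y X) {Γ : Finset S} {Y z : S}
    (hz : z ∈ pcomp incomp Γ Y) : pcomp incomp Γ z = pcomp incomp Γ Y := by
  obtain ⟨hzΓ, hr⟩ := mem_pcomp.1 hz
  ext w
  simp only [mem_pcomp]
  exact ⟨fun ⟨hw, h⟩ => ⟨hw, hr.trans h⟩, fun ⟨hw, h⟩ => ⟨hw, (preach_symm hsym hr).trans h⟩⟩

lemma preach_pcomp (hsym : ∀ X Y, incomp X Y → incomp Y X) {Γ : Finset S} {Y z w : S}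
    (hz : z ∈ pcomp incomp Γ Y) (h : preach incomp Γ z w) :
    preach incomp (pcomp incomp Γ Y) z w := by
  induction h with
  | refl => exact .refl
  | tail hzb st ih =>
    have hb := mem_pcomp.2 ⟨st.1, (mem_pcomp.1 hz).2.trans hzb⟩
    have hc := mem_pcomp.2 ⟨st.2.1, ((mem_pcomp.1 hz).2.trans hzb).tail st⟩
    exact ih.tail ⟨hb, hc, st.2.2⟩

lemma pcomp_isCluster (hsym : ∀ X Y, incomp X Y → incomp Y X) {Γ : Finset S} {Y : S}
    (hY : Y ∈ Γ) : IsCluster incomp (pcomp incomp Γ Y) := by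
  rw [isCluster_iff hsym]
  refine ⟨⟨Y, self_mem_pcomp hY⟩, fun y hy z hz => ?_⟩
  obtain ⟨hyΓ, hry⟩ := mem_pcomp.1 hy
  obtain ⟨hzΓ, hrz⟩ := mem_pcomp.1 hz
  exact preach_pcomp hsym hy ((preach_symm hsym hry).trans hrz)

lemma exists_neighbor (hsym : ∀ X Y, incomp X Y → incomp Y X) {Γ : Finset S} {X : S}
    (hX : X ∉ Γ) (hcl : IsCluster incomp (insert X Γ)) {Z : S} (hZ : Z ∈ Γ) :
    ∃ Y ∈ pcomp incomp Γ Z, incomp Y X := by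
  rw [isCluster_iff hsym] at hcl
  have h := hcl.2 X (Finset.mem_insert_self _ _) Z (Finset.mem_insert_of_mem hZ)
  have key : ∀ w, preach incomp (insert X Γ) X w →
      w = X ∨ ∃ Y ∈ Γ, incomp Y X ∧ preach incomp Γ Y w := by
    intro w hw
    induction hw with
    | refl => exact Or.inl rfl
    | tail hb st ih =>
      rcases Finset.mem_insert.1 st.2.1 with hc | hc
      · exact Or.inl hc
      · rcases ih with hbX | ⟨Y, hYΓ, hYX, hr⟩
        · exact Or.inr ⟨_, hc, hsym _ _ (hbX ▸ st.2.2), .refl⟩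
        · have hbΓ : _ ∈ Γ := preach_mem hr hYΓ
          exact Or.inr ⟨Y, hYΓ, hYX, hr.tail ⟨hbΓ, hc, st.2.2⟩⟩
  rcases key Z h with hZX | ⟨Y, hYΓ, hYX, hr⟩
  · exact absurd (hZX ▸ hZ) hX
  · exact ⟨Y, mem_pcomp.2 ⟨hYΓ, preach_symm hsym hr⟩, hYX⟩

end auxKP

section coreKP
variable {S : Type*} {incomp : S → S → Prop}

lemma clusterSum_nonneg {zhat : S → ℝ} (hz : ∀ X, 0 ≤ zhat X) (A : Finset S) (X : S) :
    0 ≤ clusterSum incomp zhat A X :=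
  Finset.sum_nonneg fun _ _ => Finset.prod_nonneg fun Y _ => hz Y

set_option maxHeartbeats 2000000 in
lemma core_ineq (hsym : ∀ X Y, incomp X Y → incomp Y X)
    (f : S → ℕ) (hf : Function.Injective f)
    (zhat : S → ℝ) (hz : ∀ X, 0 ≤ zhat X) {B : Finset S} {X : S} (hXB : X ∉ B) :
    ∑ Γ ∈ B.powerset.filter (fun Γ => IsCluster incomp (insert X Γ)), ∏ Y ∈ Γ, zhat Y
      ≤ ∏ Y ∈ B.filter (fun Y => incomp Y X), (1 + clusterSum incomp zhat B Y) := by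
  set w : Finset S → ℝ := fun Δ => ∏ Y ∈ Δ, zhat Y with hw
  have hwnn : ∀ Δ, 0 ≤ w Δ := fun Δ => Finset.prod_nonneg fun Y _ => hz Y
  set N : Finset S := B.filter (fun Y => incomp Y X) with hN
  set K : S → Finset (Finset S) :=
    fun Y => B.powerset.filter (fun Δ => IsCluster incomp Δ ∧ Y ∈ Δ) with hK
  set K' : S → Finset (Finset S) := fun Y => insert (∅ : Finset S) (K Y) with hK'
  set D : Finset (Finset S) :=
    B.powerset.filter (fun Γ => IsCluster incomp (insert X Γ)) with hD
  set marker : Finset S → S → Prop :=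
    fun Γ Y => Y ∈ Γ ∧ incomp Y X ∧ ∀ Z ∈ pcomp incomp Γ Y, incomp Z X → f Y ≤ f Z
    with hmarker
  set Φ : Finset S → S → Finset S :=
    fun Γ Y => if marker Γ Y then pcomp incomp Γ Y else ∅ with hΦ
  -- basic membership facts for Γ ∈ D
  have hDsub : ∀ Γ ∈ D, Γ ⊆ B := fun Γ hΓ =>
    Finset.mem_powerset.1 (Finset.mem_filter.1 hΓ).1
  have hDcl : ∀ Γ ∈ D, IsCluster incomp (insert X Γ) := fun Γ hΓ =>
    (Finset.mem_filter.1 hΓ).2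
  have hXΓ : ∀ Γ ∈ D, X ∉ Γ := fun Γ hΓ hmem => hXB (hDsub Γ hΓ hmem)
  -- C1 : cover
  have C1 : ∀ Γ ∈ D, ∀ Z ∈ Γ, ∃ Y ∈ N, marker Γ Y ∧ Z ∈ pcomp incomp Γ Y := by
    intro Γ hΓ Z hZ
    obtain ⟨Y₁, hY₁, hY₁X⟩ := exists_neighbor hsym (hXΓ Γ hΓ) (hDcl Γ hΓ) hZ
    set T : Finset S := (pcomp incomp Γ Z).filter (fun Y => incomp Y X) with hT
    have hTne : T.Nonempty := ⟨Y₁, Finset.mem_filter.2 ⟨hY₁, hY₁X⟩⟩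
    have hTine : (T.image f).Nonempty := hTne.image f
    obtain ⟨Y₀, hY₀T, hY₀f⟩ := Finset.mem_image.1 ((T.image f).min'_mem hTine)
    obtain ⟨hY₀c, hY₀X⟩ := Finset.mem_filter.1 hY₀T
    have hY₀Γ : Y₀ ∈ Γ := pcomp_subset hY₀c
    have heq : pcomp incomp Γ Y₀ = pcomp incomp Γ Z := pcomp_eq_of_mem hsym hY₀c
    refine ⟨Y₀, Finset.mem_filter.2 ⟨hDsub Γ hΓ hY₀Γ, hY₀X⟩,
      ⟨hY₀Γ, hY₀X, fun Z' hZ' hZ'X => ?_⟩, ?_⟩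
    · rw [hY₀f]
      exact (T.image f).min'_le (f Z')
        (Finset.mem_image_of_mem f (Finset.mem_filter.2 ⟨heq ▸ hZ', hZ'X⟩))
    · rw [heq]; exact self_mem_pcomp hZ
  -- C2 : disjointness of the marked components
  have C2 : ∀ Γ ∈ D, (↑N : Set S).PairwiseDisjoint (Φ Γ) := by
    intro Γ hΓ Y hY Y' hY' hne
    simp only [Function.onFun, hΦ]
    by_cases hm : marker Γ Y
    · by_cases hm' : marker Γ Y'
      · simp only [if_pos hm, if_pos hm']
        rw [Finset.disjoint_left]
        intro z hzY hzY'
        have h1 : pcomp incomp Γ Y = pcomp incomp Γ Y' := by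
          rw [← pcomp_eq_of_mem hsym hzY, ← pcomp_eq_of_mem hsym hzY']
        have hY'mem : Y' ∈ pcomp incomp Γ Y := h1 ▸ self_mem_pcomp hm'.1
        have hYmem : Y ∈ pcomp incomp Γ Y' := h1 ▸ self_mem_pcomp hm.1
        exact hne (hf (le_antisymm (hm.2.2 Y' hY'mem hm'.2.1) (hm'.2.2 Y hYmem hm.2.1)))
      · simp [if_neg hm']
    · simp [if_neg hm]
  -- cover as biUnion
  have hcover : ∀ Γ ∈ D, N.biUnion (Φ Γ) = Γ := by
    intro Γ hΓ
    ext z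
    simp only [Finset.mem_biUnion]
    constructor
    · rintro ⟨Y, hYN, hzY⟩
      by_cases hm : marker Γ Y
      · rw [hΦ] at hzY; simp only [if_pos hm] at hzY; exact pcomp_subset hzY
      · rw [hΦ] at hzY; simp only [if_neg hm] at hzY; exact absurd hzY (Finset.notMem_empty z)
    · intro hz
      obtain ⟨Y, hYN, hm, hzc⟩ := C1 Γ hΓ z hz
      exact ⟨Y, hYN, by rw [hΦ]; simp only [if_pos hm]; exact hzc⟩
  -- C3 : weight factorization
  have C3 : ∀ Γ ∈ D, w Γ = ∏ Y ∈ N, w (Φ Γ Y) := by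
    intro Γ hΓ
    conv_lhs => rw [hw]; rw [← hcover Γ hΓ]
    exact Finset.prod_biUnion (C2 Γ hΓ)
  -- C4 : ranges
  have C4 : ∀ Γ ∈ D, ∀ Y ∈ N, Φ Γ Y ∈ K' Y := by
    intro Γ hΓ Y hY
    by_cases hm : marker Γ Y
    · rw [hΦ]; simp only [if_pos hm]
      refine Finset.mem_insert_of_mem (Finset.mem_filter.2 ⟨Finset.mem_powerset.2
        (pcomp_subset.trans (hDsub Γ hΓ)), pcomp_isCluster hsym hm.1, self_mem_pcomp hm.1⟩)
    · rw [hΦ]; simp only [if_neg hm]; exact Finset.mem_insert_self _ _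
  -- the injection into Finset.pi
  set emb : Finset S → (∀ a ∈ N, Finset S) := fun Γ => fun Y _ => Φ Γ Y with hemb
  have hinj : ∀ Γ ∈ D, ∀ Γ' ∈ D, emb Γ = emb Γ' → Γ = Γ' := by
    intro Γ hΓ Γ' hΓ' h
    have : ∀ Y ∈ N, Φ Γ Y = Φ Γ' Y := fun Y hY => congrFun (congrFun h Y) hY
    rw [← hcover Γ hΓ, ← hcover Γ' hΓ', Finset.biUnion_congr rfl this]
  have hKne : ∀ Y, (∅ : Finset S) ∉ K Y := by
    intro Y h
    exact Finset.notMem_empty Y (Finset.mem_filter.1 h).2.2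
  calc ∑ Γ ∈ D, w Γ
      = ∑ Γ ∈ D, ∏ x ∈ N.attach, w (Φ Γ x.1) := by
        refine Finset.sum_congr rfl fun Γ hΓ => ?_
        rw [C3 Γ hΓ, ← Finset.prod_attach N (fun Y => w (Φ Γ Y))]
    _ = ∑ p ∈ D.image emb, ∏ x ∈ N.attach, w (p x.1 x.2) :=
        (Finset.sum_image (f := fun p => ∏ x ∈ N.attach, w (p x.1 x.2)) hinj).symm
    _ ≤ ∑ p ∈ N.pi K', ∏ x ∈ N.attach, w (p x.1 x.2) := by
        refine Finset.sum_le_sum_of_subset_of_nonneg ?_ ?_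
        · intro p hp
          obtain ⟨Γ, hΓ, rfl⟩ := Finset.mem_image.1 hp
          exact Finset.mem_pi.2 fun Y hY => C4 Γ hΓ Y hY
        · intro p _ _
          exact Finset.prod_nonneg fun x _ => hwnn _
    _ = ∏ Y ∈ N, ∑ C ∈ K' Y, w C := (Finset.prod_sum N K' (fun _ C => w C)).symm
    _ = ∏ Y ∈ N, (1 + clusterSum incomp zhat B Y) := by
        refine Finset.prod_congr rfl fun Y _ => ?_
        rw [hK', Finset.sum_insert (hKne Y)]
        simp only [hw, Finset.prod_empty]
        rfl

end coreKP

/-- if `Σ_{Y ≁ X} ẑ(Y) e^{a(Y)} ≤ a(X)` for all `X`, then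
`𝔛_X(A) ≤ ẑ(X) e^{a(X)}` for all finite `A ∋ X`, and consequently
`Σ_{Y ≁ X} 𝔛_Y(S) ≤ a(X)` for all `X`. -/
theorem statement15 {S : Type*} [Countable S] (incomp : S → S → Prop)
    (hsym : ∀ X Y, incomp X Y → incomp Y X) (hrefl : ∀ X, incomp X X)
    (zhat : S → ℝ) (hz : ∀ X, 0 ≤ zhat X) (a : S → ℝ) (ha : ∀ X, 0 < a X)
    (hcond : ∀ X : S,
      ∑' Y : {Y : S // incomp Y X}, ENNReal.ofReal (zhat Y.1 * Real.exp (a Y.1))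
        ≤ ENNReal.ofReal (a X)) :
    (∀ (A : Finset S) (X : S), X ∈ A →
        clusterSum incomp zhat A X ≤ zhat X * Real.exp (a X)) ∧
    (∀ X : S,
        ∑' Y : {Y : S // incomp Y X}, clusterSumTop incomp zhat Y.1
          ≤ ENNReal.ofReal (a X)) := by
  obtain ⟨f, hf⟩ := Countable.exists_injective_nat S
  -- finite neighbor sums are bounded by `a X`
  have hfin : ∀ (X : S) (N : Finset S), (∀ Y ∈ N, incomp Y X) →
      ∑ Y ∈ N, zhat Y * Real.exp (a Y) ≤ a X := by
    intro X N hNX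
    have h1 : ∑ Y ∈ N, ENNReal.ofReal (zhat Y * Real.exp (a Y)) ≤ ENNReal.ofReal (a X) := by
      have he : Function.Injective
          (fun y : {y : S // y ∈ N} => (⟨y.1, hNX y.1 y.2⟩ : {Y : S // incomp Y X})) := by
        intro y y' h
        exact Subtype.ext (congrArg (fun z : {Y : S // incomp Y X} => z.1) h)
      have h2 : ∑ y ∈ N.attach.map ⟨_, he⟩, ENNReal.ofReal (zhat y.1 * Real.exp (a y.1))
          ≤ ENNReal.ofReal (a X) := le_trans (ENNReal.sum_le_tsum _) (hcond X)
      rw [Finset.sum_map] at h2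
      simp only [Function.Embedding.coeFn_mk] at h2
      rwa [Finset.sum_attach N (fun Y => ENNReal.ofReal (zhat Y * Real.exp (a Y)))] at h2
    rw [← ENNReal.ofReal_sum_of_nonneg (fun Y _ => mul_nonneg (hz Y) (Real.exp_pos _).le)] at h1
    exact (ENNReal.ofReal_le_ofReal_iff (ha X).le).1 h1
  have part1 : ∀ A : Finset S, ∀ X ∈ A,
      clusterSum incomp zhat A X ≤ zhat X * Real.exp (a X) := by
    intro A
    induction A using Finset.strongInduction with
    | _ A ih =>
      intro X hX
      set B := A.erase X with hB
      have hXB : X ∉ B := Finset.notMem_erase X A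
      set N : Finset S := B.filter (fun Y => incomp Y X) with hN
      have hstep1 : clusterSum incomp zhat A X
          = zhat X * ∑ Γ ∈ B.powerset.filter (fun Γ => IsCluster incomp (insert X Γ)),
              ∏ Y ∈ Γ, zhat Y := by
        rw [clusterSum, Finset.mul_sum]
        refine Finset.sum_nbij' (fun Δ => Δ.erase X) (fun Γ => insert X Γ)
          ?_ ?_ ?_ ?_ ?_
        · intro Δ hΔ
          have h := Finset.mem_filter.1 hΔ
          have hΔA := Finset.mem_powerset.1 h.1
          have hΔcl := h.2.1
          have hXΔ := h.2.2
          refine Finset.mem_filter.2 ⟨Finset.mem_powerset.2 (Finset.erase_subset_erase X hΔA), ?_⟩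
          rwa [Finset.insert_erase hXΔ]
        · intro Γ hΓ
          have h := Finset.mem_filter.1 hΓ
          have hΓB := Finset.mem_powerset.1 h.1
          refine Finset.mem_filter.2 ⟨Finset.mem_powerset.2 ?_, h.2,
            Finset.mem_insert_self _ _⟩
          exact Finset.insert_subset hX (hΓB.trans (Finset.erase_subset X A))
        · intro Δ hΔ
          exact Finset.insert_erase (Finset.mem_filter.1 hΔ).2.2
        · intro Γ hΓ
          have hXΓ : X ∉ Γ := fun h =>
            hXB (Finset.mem_powerset.1 (Finset.mem_filter.1 hΓ).1 h)
          exact Finset.erase_insert hXΓ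
        · intro Δ hΔ
          exact (Finset.mul_prod_erase Δ zhat (Finset.mem_filter.1 hΔ).2.2).symm
      have hBA : B ⊂ A := Finset.erase_ssubset hX
      calc clusterSum incomp zhat A X
          = zhat X * ∑ Γ ∈ B.powerset.filter (fun Γ => IsCluster incomp (insert X Γ)),
              ∏ Y ∈ Γ, zhat Y := hstep1
        _ ≤ zhat X * ∏ Y ∈ N, (1 + clusterSum incomp zhat B Y) :=
            mul_le_mul_of_nonneg_left (core_ineq hsym f hf zhat hz hXB) (hz X)
        _ ≤ zhat X * ∏ Y ∈ N, Real.exp (zhat Y * Real.exp (a Y)) := by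
            refine mul_le_mul_of_nonneg_left (Finset.prod_le_prod ?_ ?_) (hz X)
            · intro Y _
              have := clusterSum_nonneg (incomp := incomp) hz B Y
              linarith
            · intro Y hY
              have hYB : Y ∈ B := (Finset.mem_filter.1 hY).1
              have h1 : clusterSum incomp zhat B Y ≤ zhat Y * Real.exp (a Y) :=
                ih B hBA Y hYB
              have h2 := Real.add_one_le_exp (zhat Y * Real.exp (a Y))
              linarith
        _ = zhat X * Real.exp (∑ Y ∈ N, zhat Y * Real.exp (a Y)) := by
            rw [Real.exp_sum]
        _ ≤ zhat X * Real.exp (a X) := by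
            refine mul_le_mul_of_nonneg_left (Real.exp_le_exp.2 ?_) (hz X)
            exact hfin X N (fun Y hY => (Finset.mem_filter.1 hY).2)
  refine ⟨part1, ?_⟩
  intro X
  have hsigma : (∑' Y : {Y : S // incomp Y X}, clusterSumTop incomp zhat Y.1)
      = ∑' σ : Σ Y : {Y : S // incomp Y X},
          {Δ : Finset S // IsCluster incomp Δ ∧ Y.1 ∈ Δ},
          ENNReal.ofReal (∏ W ∈ σ.2.1, zhat W) := by
    simp only [clusterSumTop]
    exact (ENNReal.tsum_sigma' (f := fun σ : (Y : {Y : S // incomp Y X}) ×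
      {Δ : Finset S // IsCluster incomp Δ ∧ Y.1 ∈ Δ} =>
        ENNReal.ofReal (∏ W ∈ σ.2.1, zhat W))).symm
  rw [hsigma]
  refine Summable.tsum_le_of_sum_le ENNReal.summable ?_
  intro F
  set A' : Finset S := F.biUnion (fun σ => σ.2.1) with hA'
  set N' : Finset S := A'.filter (fun Y => incomp Y X) with hN'
  have hreal : ∑ σ ∈ F, ∏ W ∈ σ.2.1, zhat W ≤ a X := by
    have hfiber : ∀ Y ∈ F.image Sigma.fst,
        ∑ σ ∈ F.filter (fun σ => σ.1 = Y), ∏ W ∈ σ.2.1, zhat W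
          ≤ clusterSum incomp zhat A' Y.1 := by
      intro Y hY
      have hinj : ∀ σ ∈ F.filter (fun σ => σ.1 = Y), ∀ σ' ∈ F.filter (fun σ => σ.1 = Y),
          σ.2.1 = σ'.2.1 → σ = σ' := by
        rintro ⟨Y₁, Δ₁⟩ hσ ⟨Y₂, Δ₂⟩ hσ' hval
        have h1 : Y₁ = Y := (Finset.mem_filter.1 hσ).2
        have h2 : Y₂ = Y := (Finset.mem_filter.1 hσ').2
        subst h1; subst h2
        simp only [Sigma.mk.inj_iff, heq_eq_eq]
        exact ⟨trivial, Subtype.ext hval⟩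
      have himg : (F.filter (fun σ => σ.1 = Y)).image (fun σ => σ.2.1)
          ⊆ A'.powerset.filter (fun Δ => IsCluster incomp Δ ∧ Y.1 ∈ Δ) := by
        intro Δ hΔ
        obtain ⟨σ, hσ, rfl⟩ := Finset.mem_image.1 hΔ
        have hσF : σ ∈ F := (Finset.mem_filter.1 hσ).1
        have hσY : σ.1 = Y := (Finset.mem_filter.1 hσ).2
        refine Finset.mem_filter.2 ⟨Finset.mem_powerset.2 ?_, σ.2.2.1, hσY ▸ σ.2.2.2⟩
        exact Finset.subset_biUnion_of_mem (fun σ => σ.2.1) hσF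
      calc ∑ σ ∈ F.filter (fun σ => σ.1 = Y), ∏ W ∈ σ.2.1, zhat W
          = ∑ Δ ∈ (F.filter (fun σ => σ.1 = Y)).image (fun σ => σ.2.1),
              ∏ W ∈ Δ, zhat W :=
            (Finset.sum_image (f := fun Δ => ∏ W ∈ Δ, zhat W) hinj).symm
        _ ≤ ∑ Δ ∈ A'.powerset.filter (fun Δ => IsCluster incomp Δ ∧ Y.1 ∈ Δ),
              ∏ W ∈ Δ, zhat W :=
            Finset.sum_le_sum_of_subset_of_nonneg himg
              (fun Δ _ _ => Finset.prod_nonneg fun W _ => hz W)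
        _ = clusterSum incomp zhat A' Y.1 := by rw [clusterSum]
    have hmapsto : ∀ σ ∈ F, σ.1 ∈ F.image Sigma.fst :=
      fun σ hσ => Finset.mem_image_of_mem _ hσ
    calc ∑ σ ∈ F, ∏ W ∈ σ.2.1, zhat W
        = ∑ Y ∈ F.image Sigma.fst, ∑ σ ∈ F.filter (fun σ => σ.1 = Y),
            ∏ W ∈ σ.2.1, zhat W :=
          (Finset.sum_fiberwise_of_maps_to hmapsto _).symm
      _ ≤ ∑ Y ∈ F.image Sigma.fst, clusterSum incomp zhat A' Y.1 :=
          Finset.sum_le_sum hfiber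
      _ = ∑ Y' ∈ (F.image Sigma.fst).image Subtype.val, clusterSum incomp zhat A' Y' := by
          rw [Finset.sum_image (fun y _ y' _ h => Subtype.ext h)]
      _ ≤ ∑ Y' ∈ N', clusterSum incomp zhat A' Y' := by
          refine Finset.sum_le_sum_of_subset_of_nonneg ?_
            (fun Y' _ _ => clusterSum_nonneg hz A' Y')
          intro Y' hY'
          obtain ⟨Y, hY, rfl⟩ := Finset.mem_image.1 hY'
          obtain ⟨σ, hσ, rfl⟩ := Finset.mem_image.1 hY
          have hmem : σ.1.1 ∈ A' :=
            Finset.mem_biUnion.2 ⟨σ, hσ, σ.2.2.2⟩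
          exact Finset.mem_filter.2 ⟨hmem, σ.1.2⟩
      _ ≤ ∑ Y' ∈ N', zhat Y' * Real.exp (a Y') := by
          refine Finset.sum_le_sum fun Y' hY' => part1 A' Y' ?_
          exact (Finset.mem_filter.1 hY').1
      _ ≤ a X := hfin X N' (fun Y hY => (Finset.mem_filter.1 hY).2)
  calc ∑ σ ∈ F, ENNReal.ofReal (∏ W ∈ σ.2.1, zhat W)
      = ENNReal.ofReal (∑ σ ∈ F, ∏ W ∈ σ.2.1, zhat W) :=
        (ENNReal.ofReal_sum_of_nonneg
          (fun σ _ => Finset.prod_nonneg fun W _ => hz W)).symm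
    _ ≤ ENNReal.ofReal (a X) := ENNReal.ofReal_le_ofReal hreal
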